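/- For every integer p ≥ 0 and integer k ≥ 1, ∑_{n=0}^{p} (-1)^{p-n} (k+n)! (k+p)! / ((p-n)! n! (2k+n)! (2k+2p+1)!) = (-1)^p k (k-1+p)! (k+p)! / (p! (2k+p)! (2k+1+2p)!). -/

import Mathlib

open Finset Nat

private lemma fact_ne (m : ℕ) : ((m ! : ℚ)) ≠ 0 := by
  exact_mod_cast (Nat.factorial_pos m).ne'

/-- Pascal step for alternating sums. -/
private lemma sum_pascal (p : ℕ) (a : ℕ → ℚ) :
    ∑ j ∈ Finset.range (p + 2), (-1 : ℚ) ^ j * ((p + 1).choose j) * a j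
    = ∑ j ∈ Finset.range (p + 1), (-1 : ℚ) ^ j * (p.choose j) * a j
      - ∑ j ∈ Finset.range (p + 1), (-1 : ℚ) ^ j * (p.choose j) * a (j + 1) := by
  rw [Finset.sum_range_succ' (fun j => (-1 : ℚ) ^ j * ((p + 1).choose j) * a j) (p + 1)]
  have h1 : ∀ i, (-1 : ℚ) ^ (i + 1) * ((p + 1).choose (i + 1)) * a (i + 1)
      = (-1 : ℚ) ^ (i + 1) * (p.choose i) * a (i + 1)
        + (-1 : ℚ) ^ (i + 1) * (p.choose (i + 1)) * a (i + 1) := by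
    intro i
    rw [Nat.choose_succ_succ]
    push_cast
    ring
  rw [Finset.sum_congr rfl fun i _ => h1 i, Finset.sum_add_distrib]
  have h2 : ∑ i ∈ Finset.range (p + 1), (-1 : ℚ) ^ (i + 1) * (p.choose (i + 1)) * a (i + 1)
      = ∑ j ∈ Finset.range (p + 1), (-1 : ℚ) ^ j * (p.choose j) * a j
        - (-1 : ℚ) ^ 0 * (p.choose 0) * a 0 := by
    have h3 : ∑ j ∈ Finset.range (p + 2), (-1 : ℚ) ^ j * (p.choose j) * a j
        = ∑ j ∈ Finset.range (p + 1), (-1 : ℚ) ^ j * (p.choose j) * a j := by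
      rw [Finset.sum_range_succ, Nat.choose_succ_self]
      simp
    rw [← h3, Finset.sum_range_succ' (fun j => (-1 : ℚ) ^ j * (p.choose j) * a j) (p + 1)]
    ring
  rw [h2]
  have : ∀ i ∈ Finset.range (p + 1),
      (-1 : ℚ) ^ (i + 1) * (p.choose i) * a (i + 1)
      = -((-1 : ℚ) ^ i * (p.choose i) * a (i + 1)) := by
    intro i _; ring
  rw [Finset.sum_congr rfl this, Finset.sum_neg_distrib]
  simp
  ring

/-- Closed form for the finite difference sum. -/
private lemma key (k : ℕ) (hk : 1 ≤ k) : ∀ p n : ℕ,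
    ∑ j ∈ Finset.range (p + 1),
      (-1 : ℚ) ^ j * (p.choose j) * ((k + n + j)! / (2 * k + n + j)!)
    = (k + n)! * (k - 1 + p)! / ((k - 1)! * (2 * k + n + p)!) := by
  intro p
  induction p with
  | zero =>
    intro n
    rw [Finset.sum_range_one]
    simp only [pow_zero, Nat.choose_zero_right, Nat.cast_one, one_mul, Nat.add_zero]
    rw [div_eq_div_iff (fact_ne _) (by positivity)]
    ring
  | succ p ih =>
    intro n
    have hre : ∀ j, (k + n + (j + 1)) = (k + (n + 1) + j) := by intro j; omega
    have hre2 : ∀ j, (2 * k + n + (j + 1)) = (2 * k + (n + 1) + j) := by intro j; omega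
    rw [sum_pascal p (fun j => ((k + n + j)! : ℚ) / (2 * k + n + j)!)]

    have hs : ∑ j ∈ Finset.range (p + 1), (-1 : ℚ) ^ j * (p.choose j) *
        ((k + n + (j + 1))! / (2 * k + n + (j + 1))!)
        = ∑ j ∈ Finset.range (p + 1), (-1 : ℚ) ^ j * (p.choose j) *
        ((k + (n + 1) + j)! / (2 * k + (n + 1) + j)!) := by
      apply Finset.sum_congr rfl
      intro j _
      rw [hre j, hre2 j]
    rw [hs, ih n, ih (n + 1)]
    -- algebra
    have e1 : (k + (n + 1)) = (k + n) + 1 := by omega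
    have e2 : (2 * k + (n + 1) + p) = (2 * k + n + p) + 1 := by omega
    have e3 : (2 * k + n + (p + 1)) = (2 * k + n + p) + 1 := by omega
    have e4 : (k - 1 + (p + 1)) = (k - 1 + p) + 1 := by omega
    rw [e1, e2, e3, e4, Nat.factorial_succ, Nat.factorial_succ, Nat.factorial_succ]
    have h5 : ((k - 1 + p) + 1 : ℕ) = k + p := by omega
    have h6 : ((2 * k + n + p) + 1 : ℕ) - ((k + n) + 1) = k + p := by omega
    push_cast
    field_simp
    ring_nf
    exact_mod_cast (by omega : k + p = 1 + p + (k - 1))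

theorem coeff_identity (p k : ℕ) (hk : 1 ≤ k) :
    ∑ n ∈ Finset.range (p + 1),
      (-1 : ℚ) ^ (p - n) * (k + n)! * (k + p)! /
        ((p - n)! * n ! * (2 * k + n)! * (2 * k + 2 * p + 1)!)
    = (-1 : ℚ) ^ p * k * (k - 1 + p)! * (k + p)! /
        (p ! * (2 * k + p)! * (2 * k + 1 + 2 * p)!) := by
  have hterm : ∀ n ∈ Finset.range (p + 1),
      (-1 : ℚ) ^ (p - n) * (k + n)! * (k + p)! /
        ((p - n)! * n ! * (2 * k + n)! * (2 * k + 2 * p + 1)!)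
      = ((-1 : ℚ) ^ p * (k + p)! / (p ! * (2 * k + 2 * p + 1)!)) *
          ((-1 : ℚ) ^ n * (p.choose n) * ((k + n)! / (2 * k + n)!)) := by
    intro n hn
    have hnp : n ≤ p := by simpa [Nat.lt_succ_iff] using hn
    have hsign : (-1 : ℚ) ^ (p - n) = (-1 : ℚ) ^ p * (-1 : ℚ) ^ n := by
      have hsq : (-1 : ℚ) ^ n * (-1 : ℚ) ^ n = 1 := by
        rw [← pow_add]; exact Even.neg_one_pow ⟨n, rfl⟩
      calc (-1 : ℚ) ^ (p - n) = (-1 : ℚ) ^ (p - n) * ((-1 : ℚ) ^ n * (-1 : ℚ) ^ n) := by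
            rw [hsq, mul_one]
        _ = ((-1 : ℚ) ^ (p - n) * (-1 : ℚ) ^ n) * (-1 : ℚ) ^ n := by ring
        _ = (-1 : ℚ) ^ p * (-1 : ℚ) ^ n := by rw [← pow_add, Nat.sub_add_cancel hnp]
    have hchoose : ((p ! : ℚ)) = (p.choose n) * n ! * (p - n)! := by
      exact_mod_cast (Nat.choose_mul_factorial_mul_factorial hnp).symm
    have h1 := fact_ne (p - n)
    have h2 := fact_ne n
    have h3 := fact_ne (2 * k + n)
    have h4 := fact_ne (2 * k + 2 * p + 1)
    have h5 := fact_ne p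
    rw [hsign]
    field_simp
    rw [hchoose]
    ring
  have hkey := key k hk p 0
  simp only [Nat.add_zero] at hkey
  rw [Finset.sum_congr rfl hterm, ← Finset.mul_sum, hkey]
  have h2 : (2 * k + 2 * p + 1) = 2 * k + 1 + 2 * p := by omega
  rw [h2]
  have hku : ((k ! : ℚ)) = k * ((k - 1)! : ℚ) := by
    exact_mod_cast (Nat.mul_factorial_pred (by omega)).symm
  rw [hku]
  have h1 := fact_ne p
  have h2' := fact_ne (2 * k + 1 + 2 * p)
  have h3 := fact_ne (k - 1)
  have h4 := fact_ne (2 * k + p)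
  field_simp
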